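/- Under the semi-frame hypotheses, the following are equivalent: (i) (R^{12}_a ⊗_{C₁₂₃} R^{23}_b) ⊗_{C₁₃₄} R^{34}_c = R^{12}_a ⊗_{C₁₂₄} (R^{23}_b ⊗_{C₂₃₄} R^{34}_c) for some a ∈ G₁⧸H₁₂, b ∈ G₂⧸H₂₃, c ∈ G₃⧸H₃₄; (ii) this equation holds for all such a, b, c; (iii) C₁₂₃·C₁₃₄ = φ₁₂⁻¹[C₂₃₄·K₁₂]·C₁₂₄. (Associative Law Theorem.) -/
import Mathlib


open scoped Pointwise

namespace CosetRA

variable {G G' : Type*}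

/-- The coset of `a : G ⧸ N` as a subset of `G`: `⟨a⟩ = {g : G | [g]_N = a}`. -/
def cosetOf [Group G] (N : Subgroup G) (a : G ⧸ N) : Set G :=
  {g : G | (g : G ⧸ N) = a}

/-- Forward image `φ[S]` of a subset `S ⊆ G` under a quotient isomorphism. -/
def fwd [Group G] [Group G'] (N : Subgroup G) (M : Subgroup G')
    [N.Normal] [M.Normal] (φ : G ⧸ N ≃* G' ⧸ M) (S : Set G) : Set G' :=
  {h : G' | ∃ g ∈ S, φ (g : G ⧸ N) = (h : G' ⧸ M)}

/-- Inverse image `φ⁻¹[S']` of a subset `S' ⊆ G'` under a quotient isomorphism. -/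
def bwd [Group G] [Group G'] (N : Subgroup G) (M : Subgroup G')
    [N.Normal] [M.Normal] (φ : G ⧸ N ≃* G' ⧸ M) (S' : Set G') : Set G :=
  {g : G | ∃ h ∈ S', φ (g : G ⧸ N) = (h : G' ⧸ M)}

/-- The atomic relation `R_a = {(g,h) : [h]_M = φ([g]_N)·φ(a)}`. -/
def atom [Group G] [Group G'] (N : Subgroup G) (M : Subgroup G')
    [N.Normal] [M.Normal] (φ : G ⧸ N ≃* G' ⧸ M) (a : G ⧸ N) : Set (G × G') :=
  {p : G × G' | (p.2 : G' ⧸ M) = φ (p.1 : G ⧸ N) * φ a}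

/-- Converse of a relation: `R˘ = {(v,u) : (u,v) ∈ R}`. -/
def conv {α β : Type*} (R : Set (α × β)) : Set (β × α) := {p | (p.2, p.1) ∈ R}

/-- Relational composition `R ∘ S`. -/
def rcomp {α β γ : Type*} (R : Set (α × β)) (S : Set (β × γ)) : Set (α × γ) :=
  {p | ∃ v, (p.1, v) ∈ R ∧ (v, p.2) ∈ S}

/-- `C` is a left coset of the set `P`. -/
def IsLeftCosetSet [Group G] (P C : Set G) : Prop := ∃ g : G, C = g • P

/-- `Q` is a union of left cosets of the set `P`. -/
def IsUnionOfCosets [Group G] (P Q : Set G) : Prop := ∀ g ∈ Q, g • P ⊆ Q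

/-- The union of all atomic relations `R_c` with `⟨c⟩ ⊆ K`. -/
def unionAtoms [Group G] [Group G'] (N : Subgroup G) (M : Subgroup G')
    [N.Normal] [M.Normal] (φ : G ⧸ N ≃* G' ⧸ M) (K : Set G) : Set (G × G') :=
  ⋃ c ∈ {c : G ⧸ N | cosetOf N c ⊆ K}, atom N M φ c

section Helpers
variable [Group G] [Group G']

/-- membership in a smul coset -/
lemma mem_smul_coe {X : Subgroup G} {g x : G} : x ∈ g • (X : Set G) ↔ g⁻¹ * x ∈ X := by
  constructor
  · rintro ⟨y, hy, rfl⟩; simpa using hy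
  · intro h; exact ⟨g⁻¹ * x, h, by simp [smul_eq_mul]⟩

lemma cosetOf_mk {N : Subgroup G} (g : G) : cosetOf N (g : G ⧸ N) = g • (N : Set G) := by
  ext x
  rw [mem_smul_coe]
  constructor
  · intro h; exact QuotientGroup.eq.1 h.symm
  · intro h; exact (QuotientGroup.eq.2 h).symm

lemma smul_coe_eq_iff {X : Subgroup G} {g h : G} :
    g • (X : Set G) = h • (X : Set G) ↔ g⁻¹ * h ∈ X := by
  constructor
  · intro he
    have : h ∈ g • (X : Set G) := by rw [he]; exact ⟨1, X.one_mem, by simp⟩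
    exact mem_smul_coe.1 this
  · intro hm
    ext x
    rw [mem_smul_coe, mem_smul_coe]
    constructor
    · intro hx; have := X.mul_mem (X.inv_mem hm) hx; simpa [mul_assoc] using this
    · intro hx; have := X.mul_mem hm hx; simpa [mul_assoc] using this

/-- For X normal: (g•↑X) * T = g • (↑X * T) and mixed products. -/
lemma smul_mul (g : G) (S T : Set G) : (g • S) * T = g • (S * T) := by
  exact smul_mul_assoc g S T

lemma coe_mul_smul {X : Subgroup G} [X.Normal] (h : G) (T : Set G) :
    (X : Set G) * (h • T) = h • ((X : Set G) * T) := by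
  ext x
  constructor
  · rintro ⟨a, ha, _, ⟨t, ht, rfl⟩, rfl⟩
    refine ⟨(h⁻¹ * a * h) * t, Set.mul_mem_mul (by simpa using Subgroup.Normal.conj_mem ‹X.Normal› a ha h⁻¹) ht, ?_⟩
    simp [smul_eq_mul]; group
  · rintro ⟨_, ⟨a, ha, t, ht, rfl⟩, rfl⟩
    refine ⟨h * a * h⁻¹, Subgroup.Normal.conj_mem ‹X.Normal› a ha h, h * t, ⟨t, ht, rfl⟩, ?_⟩
    simp [smul_eq_mul]; group

lemma smul_coe_mul_smul {X : Subgroup G} [X.Normal] (g h : G) (T : Set G) :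
    (g • (X : Set G)) * (h • T) = (g * h) • ((X : Set G) * T) := by
  rw [smul_mul, coe_mul_smul, smul_smul]

lemma coe_mul_coe (X Y : Subgroup G) [Y.Normal] : (X : Set G) * (Y : Set G) = ↑(X ⊔ Y) :=
  (Subgroup.mul_normal X Y).symm

lemma coe_mul_coe' (X Y : Subgroup G) [X.Normal] : (X : Set G) * (Y : Set G) = ↑(X ⊔ Y) :=
  (Subgroup.normal_mul X Y).symm

lemma inv_smul_coe {X : Subgroup G} [X.Normal] (g : G) :
    (g • (X : Set G))⁻¹ = g⁻¹ • (X : Set G) := by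
  ext x
  rw [Set.mem_inv, mem_smul_coe, mem_smul_coe]
  constructor
  · intro h
    have := Subgroup.Normal.conj_mem ‹X.Normal› _ (X.inv_mem h) g
    have h2 : g * (g⁻¹ * x⁻¹)⁻¹ * g⁻¹ = g⁻¹⁻¹ * x := by group
    rwa [h2] at this
  · intro h
    have := Subgroup.Normal.conj_mem ‹X.Normal› _ (X.inv_mem h) g⁻¹
    have h2 : g⁻¹ * (g⁻¹⁻¹ * x)⁻¹ * g⁻¹⁻¹ = g⁻¹ * x⁻¹ := by group
    rwa [h2] at this


end Helpers

section Two
variable [Group G] [Group G'] {N : Subgroup G} {M : Subgroup G'} [N.Normal] [M.Normal] (φ : G ⧸ N ≃* G' ⧸ M)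

lemma bwd_eq_fwd_symm (S : Set G') : bwd N M φ S = fwd M N φ.symm S := by
  ext g
  constructor
  · rintro ⟨h, hS, he⟩; exact ⟨h, hS, by rw [← he]; simp⟩
  · rintro ⟨h, hS, he⟩; exact ⟨h, hS, by rw [← he]; simp⟩

lemma fwd_smul {g : G} {h : G'} (hg : φ (g : G ⧸ N) = (h : G' ⧸ M)) (S : Set G) :
    fwd N M φ (g • S) = h • fwd N M φ S := by
  ext y
  constructor
  · rintro ⟨_, ⟨s, hs, rfl⟩, he⟩
    simp only [smul_eq_mul] at he
    have hgs : ((g * s : G) : G ⧸ N) = (g : G ⧸ N) * (s : G ⧸ N) := by simp [QuotientGroup.mk_mul]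
    rw [hgs, map_mul, hg] at he
    refine ⟨h⁻¹ * y, ⟨s, hs, ?_⟩, by simp [smul_eq_mul]⟩
    have h1 : ((h⁻¹ * y : G') : G' ⧸ M) = ((h : G' ⧸ M))⁻¹ * (y : G' ⧸ M) := by
      simp [QuotientGroup.mk_mul]
    rw [h1, ← he]
    group
  · rintro ⟨y', ⟨s, hs, he⟩, rfl⟩
    refine ⟨g * s, ⟨s, hs, rfl⟩, ?_⟩
    have : ((g * s : G) : G ⧸ N) = (g : G ⧸ N) * (s : G ⧸ N) := by simp [QuotientGroup.mk_mul]
    rw [this, map_mul, hg, he]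
    show _ = ((h * y' : G') : G' ⧸ M)
    simp [QuotientGroup.mk_mul]

lemma fwd_mul (S T : Set G) : fwd N M φ (S * T) = fwd N M φ S * fwd N M φ T := by
  ext y
  constructor
  · rintro ⟨_, ⟨s, hs, t, ht, rfl⟩, he⟩
    set y₁ := (φ (s : G ⧸ N)).out with hy₁
    refine ⟨y₁, ⟨s, hs, by simp [hy₁]⟩, y₁⁻¹ * y, ⟨t, ht, ?_⟩, by simp⟩
    have h1 : ((y₁⁻¹ * y : G') : G' ⧸ M) = ((y₁ : G' ⧸ M))⁻¹ * (y : G' ⧸ M) := by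
      simp [QuotientGroup.mk_mul]
    rw [h1, ← he]
    have h2 : ((s * t : G) : G ⧸ N) = (s : G ⧸ N) * (t : G ⧸ N) := by simp [QuotientGroup.mk_mul]
    rw [h2, map_mul]
    have h3 : ((y₁ : G') : G' ⧸ M) = φ (s : G ⧸ N) := by simp [hy₁]
    rw [h3]; group
  · rintro ⟨y₁, ⟨s, hs, he₁⟩, y₂, ⟨t, ht, he₂⟩, rfl⟩
    refine ⟨s * t, ⟨s, hs, t, ht, rfl⟩, ?_⟩
    have h2 : ((s * t : G) : G ⧸ N) = (s : G ⧸ N) * (t : G ⧸ N) := by simp [QuotientGroup.mk_mul]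
    rw [h2, map_mul, he₁, he₂]
    simp [QuotientGroup.mk_mul]

lemma bwd_fwd (S : Set G) : bwd N M φ (fwd N M φ S) = S * (N : Set G) := by
  ext x
  constructor
  · rintro ⟨h, ⟨s, hs, he₁⟩, he₂⟩
    have : φ (x : G ⧸ N) = φ (s : G ⧸ N) := by rw [he₁, he₂]
    have hq : (s : G ⧸ N) = (x : G ⧸ N) := (φ.injective this).symm
    exact ⟨s, hs, s⁻¹ * x, QuotientGroup.eq.1 hq, by group⟩
  · rintro ⟨s, hs, n, hn, rfl⟩
    refine ⟨(φ ((s*n : G) : G ⧸ N)).out, ⟨s, hs, ?_⟩, by simp⟩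
    have : ((s * n : G) : G ⧸ N) = (s : G ⧸ N) := (QuotientGroup.eq.2 (by simpa using hn)).symm
    simp [this]

lemma fwd_coe : fwd N M φ (N : Set G) = (M : Set G') := by
  ext y
  constructor
  · rintro ⟨n, hn, he⟩
    have h1 : ((n : G) : G ⧸ N) = (1 : G ⧸ N) := (QuotientGroup.eq_one_iff n).2 hn
    rw [h1, map_one] at he
    exact (QuotientGroup.eq_one_iff y).1 he.symm
  · intro hy
    exact ⟨1, N.one_mem, by simpa using ((QuotientGroup.eq_one_iff y).2 hy).symm⟩

lemma bwd_biUnion {ι : Type*} (s : Set ι) (f : ι → Set G') :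
    bwd N M φ (⋃ i ∈ s, f i) = ⋃ i ∈ s, bwd N M φ (f i) := by
  ext g
  constructor
  · rintro ⟨h, hS, he⟩
    rw [Set.mem_iUnion₂] at hS
    obtain ⟨i, hi, hfi⟩ := hS
    exact Set.mem_iUnion₂.2 ⟨i, hi, h, hfi, he⟩
  · intro hg
    obtain ⟨i, hi, h, hf, he⟩ := Set.mem_iUnion₂.1 hg
    exact ⟨h, Set.mem_iUnion₂.2 ⟨i, hi, hf⟩, he⟩

end Two

section Three
variable [Group G] [Group G']

/-- generic: union over quotient classes contained in a saturated set -/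
lemma biUnion_quot {N : Subgroup G} {A : Set G} (hA : ∀ g ∈ A, g • (N : Set G) ⊆ A)
    {α : Type*} (F : G ⧸ N → Set α) :
    (⋃ γ ∈ {γ : G ⧸ N | cosetOf N γ ⊆ A}, F γ) = ⋃ w ∈ A, F (w : G ⧸ N) := by
  ext x
  simp only [Set.mem_iUnion₂]
  constructor
  · rintro ⟨γ, hγ, hx⟩
    refine ⟨γ.out, hγ ?_, by rwa [QuotientGroup.out_eq']⟩
    show ((γ.out : G) : G ⧸ N) = γ
    exact QuotientGroup.out_eq' γ
  · rintro ⟨w, hw, hx⟩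
    refine ⟨(w : G ⧸ N), ?_, hx⟩
    rw [Set.mem_setOf_eq, cosetOf_mk]
    exact hA w hw

/-- the relation determined by a subset T of G (for φ : G⧸N ≃* G'⧸M) -/
def relOf {N : Subgroup G} {M : Subgroup G'} [N.Normal] [M.Normal]
    (φ : G ⧸ N ≃* G' ⧸ M) (T : Set G) : Set (G × G') :=
  {p : G × G' | ∃ t ∈ T, φ ((p.1 : G ⧸ N) * (t : G ⧸ N)) = (p.2 : G' ⧸ M)}

variable {N : Subgroup G} {M : Subgroup G'} [N.Normal] [M.Normal] (φ : G ⧸ N ≃* G' ⧸ M)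

lemma unionAtoms_eq_relOf {T : Set G} (hT : ∀ t ∈ T, t • (N : Set G) ⊆ T) :
    unionAtoms N M φ T = relOf φ T := by
  ext ⟨g, h⟩
  simp only [unionAtoms, Set.mem_iUnion₂]
  constructor
  · rintro ⟨d, hd, hatom⟩
    have hout : ((d.out : G) : G ⧸ N) = d := QuotientGroup.out_eq' d
    refine ⟨d.out, hd (by rwa [cosetOf, Set.mem_setOf_eq]), ?_⟩
    rw [map_mul, hout]
    exact hatom.symm
  · rintro ⟨t, ht, he⟩
    refine ⟨(t : G ⧸ N), ?_, ?_⟩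
    · rw [Set.mem_setOf_eq, cosetOf_mk]; exact hT t ht
    · show ((g,h).2 : G' ⧸ M) = _
      rw [← he, map_mul]

lemma relOf_biUnion {ι : Type*} (s : Set ι) (f : ι → Set G) :
    (⋃ i ∈ s, relOf φ (f i)) = relOf φ (⋃ i ∈ s, f i) := by
  ext p
  constructor
  · intro hp
    obtain ⟨i, hi, t, ht, he⟩ := Set.mem_iUnion₂.1 hp
    exact ⟨t, Set.mem_iUnion₂.2 ⟨i, hi, ht⟩, he⟩
  · rintro ⟨t, ht, he⟩
    obtain ⟨i, hi, hti⟩ := Set.mem_iUnion₂.1 ht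
    exact Set.mem_iUnion₂.2 ⟨i, hi, t, hti, he⟩

lemma relOf_eq_iff {S T : Set G} (hS : ∀ t ∈ S, t • (N : Set G) ⊆ S)
    (hT : ∀ t ∈ T, t • (N : Set G) ⊆ T) :
    relOf φ S = relOf φ T ↔ S = T := by
  constructor
  · intro he
    have key : ∀ (S T : Set G), relOf φ S = relOf φ T →
        (∀ t ∈ T, t • (N : Set G) ⊆ T) → S ⊆ T := by
      intro S T he hT t ht
      have hp : ((1 : G), (φ (t : G ⧸ N)).out) ∈ relOf φ S := by
        refine ⟨t, ht, ?_⟩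
        simp [QuotientGroup.out_eq']
      rw [he] at hp
      obtain ⟨t', ht', he'⟩ := hp
      simp only [QuotientGroup.mk_one, one_mul, QuotientGroup.out_eq'] at he'
      have : (t' : G ⧸ N) = (t : G ⧸ N) := φ.injective he'
      have htt : t ∈ t' • (N : Set G) := mem_smul_coe.2 (QuotientGroup.eq.1 this)
      exact hT t' ht' htt
    exact Set.Subset.antisymm (key S T he hT) (key T S he.symm hS)
  · rintro rfl; rfl

lemma biUnion_smul (A T : Set G) : (⋃ w ∈ A, w • T) = A * T := by
  ext x
  simp only [Set.mem_iUnion₂]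
  constructor
  · rintro ⟨w, hw, t, ht, rfl⟩
    exact Set.mul_mem_mul hw ht
  · rintro ⟨w, hw, t, ht, rfl⟩
    exact ⟨w, hw, t, ht, rfl⟩

lemma biUnion_mul {ι : Type*} (s : Set ι) (f : ι → Set G) (C : Set G) :
    (⋃ i ∈ s, f i) * C = ⋃ i ∈ s, (f i * C) := by
  ext x
  constructor
  · rintro ⟨a, ha, c, hc, rfl⟩
    obtain ⟨i, hi, hai⟩ := Set.mem_iUnion₂.1 ha
    exact Set.mem_iUnion₂.2 ⟨i, hi, Set.mul_mem_mul hai hc⟩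
  · intro hx
    obtain ⟨i, hi, a, ha, c, hc, rfl⟩ := Set.mem_iUnion₂.1 hx
    exact Set.mul_mem_mul (Set.mem_iUnion₂.2 ⟨i, hi, ha⟩) hc

lemma smul_coe_saturated {X : Subgroup G} {Nsub : Subgroup G} (hle : Nsub ≤ X) (g : G) :
    ∀ g' ∈ g • (X : Set G), g' • (Nsub : Set G) ⊆ g • (X : Set G) := by
  intro g' hg'
  rintro _ ⟨n, hn, rfl⟩
  have h1 : g⁻¹ * g' ∈ X := mem_smul_coe.1 hg'
  exact mem_smul_coe.2 (by simpa [mul_assoc] using X.mul_mem h1 (hle hn))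


lemma smul_coe_mul_smul_coe {X : Subgroup G} [X.Normal] (g h : G) :
    (g • (X : Set G)) * (h • (X : Set G)) = (g * h) • (X : Set G) := by
  rw [smul_coe_mul_smul, coe_mul_coe, sup_idem]

lemma coe_mul_coe_of_le {X Y : Subgroup G} [Y.Normal] (hle : Y ≤ X) :
    (X : Set G) * (Y : Set G) = (X : Set G) := by
  rw [coe_mul_coe, sup_eq_left.2 hle]

/-- replace a representative in a coset -/
lemma rep_change {X : Subgroup G} (g m u : G) (hm : m⁻¹ * u ∈ X) :
    (g * m) • (X : Set G) = (g * u) • (X : Set G) := by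
  rw [smul_coe_eq_iff]
  have : (g * m)⁻¹ * (g * u) = m⁻¹ * u := by group
  rw [this]; exact hm

lemma rep_change' {X : Subgroup G} [X.Normal] (m u t : G) (hm : m⁻¹ * u ∈ X) :
    (m * t) • (X : Set G) = (u * t) • (X : Set G) := by
  rw [smul_coe_eq_iff]
  have h1 : (m * t)⁻¹ * (u * t) = t⁻¹ * (m⁻¹ * u) * t := by group
  rw [h1]
  simpa using Subgroup.Normal.conj_mem ‹X.Normal› _ hm t⁻¹

section Four
variable [Group G] [Group G'] {N : Subgroup G} {M : Subgroup G'} [N.Normal] [M.Normal]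
  (φ : G ⧸ N ≃* G' ⧸ M)

lemma bwd_smul_of_fwd {X : Subgroup G} (hle : N ≤ X) {Y : Set G'}
    (hf : fwd N M φ (X : Set G) = Y) {g : G} {h : G'} (hg : φ (g : G ⧸ N) = (h : G' ⧸ M)) :
    bwd N M φ (h • Y) = g • (X : Set G) := by
  rw [← hf, ← fwd_smul φ hg, bwd_fwd, smul_mul, coe_mul_coe, sup_eq_left.2 hle]

lemma cosetOf_mul_cosetOf {K H : Subgroup G'} [K.Normal] [H.Normal] (u : G' ⧸ K) (v : G' ⧸ H) :
    cosetOf K u * cosetOf H v = (u.out * v.out) • ((K ⊔ H : Subgroup G') : Set G') := by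
  conv_lhs => rw [← QuotientGroup.out_eq' u, ← QuotientGroup.out_eq' v]
  rw [cosetOf_mk, cosetOf_mk, smul_coe_mul_smul, coe_mul_coe]

lemma bwd_cosetOf_mul {X : Subgroup G} {H : Subgroup G'} [H.Normal] (hle : N ≤ X)
    (hf : fwd N M φ (X : Set G) = ((M ⊔ H : Subgroup G') : Set G'))
    (u : G ⧸ N) (v : G' ⧸ H) :
    bwd N M φ (cosetOf M (φ u) * cosetOf H v)
      = (u.out * (φ.symm ((v.out : G') : G' ⧸ M)).out) • (X : Set G) := by
  rw [cosetOf_mul_cosetOf]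
  refine bwd_smul_of_fwd φ hle hf ?_
  have h1 : ((u.out * (φ.symm ((v.out : G') : G' ⧸ M)).out : G) : G ⧸ N)
      = (u.out : G ⧸ N) * ((φ.symm ((v.out : G') : G' ⧸ M)).out : G ⧸ N) := by
    simp [QuotientGroup.mk_mul]
  rw [h1, map_mul]
  simp [QuotientGroup.out_eq', QuotientGroup.mk_mul]

lemma bwd_cosetOf_mul' {X : Subgroup G} {H : Subgroup G'} [H.Normal] (hle : N ≤ X)
    (hf : fwd N M φ (X : Set G) = ((M ⊔ H : Subgroup G') : Set G'))
    (u : G ⧸ N) (v : G' ⧸ H) {g : G}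
    (hg : φ ((g : G) : G ⧸ N) = φ u * ((v.out : G') : G' ⧸ M)) :
    bwd N M φ (cosetOf M (φ u) * cosetOf H v) = g • (X : Set G) := by
  rw [cosetOf_mul_cosetOf]
  refine bwd_smul_of_fwd φ hle hf ?_
  rw [QuotientGroup.mk_mul, QuotientGroup.out_eq']
  exact hg

lemma biUnion_mul_smul (D : Set G) (x : G) (S : Set G) :
    (⋃ u ∈ D, (x * u) • S) = x • (D * S) := by
  ext y
  constructor
  · intro hy
    obtain ⟨u, hu, t, ht, rfl⟩ := Set.mem_iUnion₂.1 hy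
    exact ⟨u * t, Set.mul_mem_mul hu ht, by simp [smul_eq_mul, mul_assoc]⟩
  · rintro ⟨_, ⟨u, hu, t, ht, rfl⟩, rfl⟩
    exact Set.mem_iUnion₂.2 ⟨u, hu, t, ht, by simp [smul_eq_mul, mul_assoc]⟩

end Four
end Three

/-- **Associative Law Theorem.** -/
theorem associative_law_theorem
    {G₁ G₂ G₃ G₄ : Type*} [Group G₁] [Group G₂] [Group G₃] [Group G₄]
    (H₁₂ : Subgroup G₁) (K₁₂ : Subgroup G₂) (H₁₃ : Subgroup G₁) (K₁₃ : Subgroup G₃)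
    (H₁₄ : Subgroup G₁) (K₁₄ : Subgroup G₄) (H₂₃ : Subgroup G₂) (K₂₃ : Subgroup G₃)
    (H₂₄ : Subgroup G₂) (K₂₄ : Subgroup G₄) (H₃₄ : Subgroup G₃) (K₃₄ : Subgroup G₄)
    [H₁₂.Normal] [K₁₂.Normal] [H₁₃.Normal] [K₁₃.Normal] [H₁₄.Normal] [K₁₄.Normal]
    [H₂₃.Normal] [K₂₃.Normal] [H₂₄.Normal] [K₂₄.Normal] [H₃₄.Normal] [K₃₄.Normal]
    (φ₁₂ : G₁ ⧸ H₁₂ ≃* G₂ ⧸ K₁₂) (φ₁₃ : G₁ ⧸ H₁₃ ≃* G₃ ⧸ K₁₃)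
    (φ₁₄ : G₁ ⧸ H₁₄ ≃* G₄ ⧸ K₁₄) (φ₂₃ : G₂ ⧸ H₂₃ ≃* G₃ ⧸ K₂₃)
    (φ₂₄ : G₂ ⧸ H₂₄ ≃* G₄ ⧸ K₂₄) (φ₃₄ : G₃ ⧸ H₃₄ ≃* G₄ ⧸ K₃₄)
    (C₁₂₃ : Set G₁) (hC₁₂₃ : IsLeftCosetSet ((H₁₂ : Set G₁) * (H₁₃ : Set G₁)) C₁₂₃)
    (C₁₃₄ : Set G₁) (hC₁₃₄ : IsLeftCosetSet ((H₁₃ : Set G₁) * (H₁₄ : Set G₁)) C₁₃₄)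
    (C₂₃₄ : Set G₂) (hC₂₃₄ : IsLeftCosetSet ((H₂₃ : Set G₂) * (H₂₄ : Set G₂)) C₂₃₄)
    (C₁₂₄ : Set G₁) (hC₁₂₄ : IsLeftCosetSet ((H₁₂ : Set G₁) * (H₁₄ : Set G₁)) C₁₂₄)
    -- semi-frame conditions for the triple (1,2,3)
    (h123a : fwd H₁₂ K₁₂ φ₁₂ ((H₁₂ : Set G₁) * (H₁₃ : Set G₁)) = (K₁₂ : Set G₂) * (H₂₃ : Set G₂))
    (h123b : fwd H₂₃ K₂₃ φ₂₃ ((K₁₂ : Set G₂) * (H₂₃ : Set G₂)) = (K₁₃ : Set G₃) * (K₂₃ : Set G₃))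
    (h123c : fwd H₁₃ K₁₃ φ₁₃ ((H₁₂ : Set G₁) * (H₁₃ : Set G₁)) = (K₁₃ : Set G₃) * (K₂₃ : Set G₃))
    (h123d : ∀ Q : Set G₁, IsUnionOfCosets ((H₁₂ : Set G₁) * (H₁₃ : Set G₁)) Q →
      fwd H₂₃ K₂₃ φ₂₃ (fwd H₁₂ K₁₂ φ₁₂ Q) = fwd H₁₃ K₁₃ φ₁₃ (C₁₂₃⁻¹ * Q * C₁₂₃))
    -- semi-frame conditions for the triple (1,2,4)
    (h124a : fwd H₁₂ K₁₂ φ₁₂ ((H₁₂ : Set G₁) * (H₁₄ : Set G₁)) = (K₁₂ : Set G₂) * (H₂₄ : Set G₂))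
    (h124b : fwd H₂₄ K₂₄ φ₂₄ ((K₁₂ : Set G₂) * (H₂₄ : Set G₂)) = (K₁₄ : Set G₄) * (K₂₄ : Set G₄))
    (h124c : fwd H₁₄ K₁₄ φ₁₄ ((H₁₂ : Set G₁) * (H₁₄ : Set G₁)) = (K₁₄ : Set G₄) * (K₂₄ : Set G₄))
    (h124d : ∀ Q : Set G₁, IsUnionOfCosets ((H₁₂ : Set G₁) * (H₁₄ : Set G₁)) Q →
      fwd H₂₄ K₂₄ φ₂₄ (fwd H₁₂ K₁₂ φ₁₂ Q) = fwd H₁₄ K₁₄ φ₁₄ (C₁₂₄⁻¹ * Q * C₁₂₄))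
    -- semi-frame conditions for the triple (1,3,4)
    (h134a : fwd H₁₃ K₁₃ φ₁₃ ((H₁₃ : Set G₁) * (H₁₄ : Set G₁)) = (K₁₃ : Set G₃) * (H₃₄ : Set G₃))
    (h134b : fwd H₃₄ K₃₄ φ₃₄ ((K₁₃ : Set G₃) * (H₃₄ : Set G₃)) = (K₁₄ : Set G₄) * (K₃₄ : Set G₄))
    (h134c : fwd H₁₄ K₁₄ φ₁₄ ((H₁₃ : Set G₁) * (H₁₄ : Set G₁)) = (K₁₄ : Set G₄) * (K₃₄ : Set G₄))
    (h134d : ∀ Q : Set G₁, IsUnionOfCosets ((H₁₃ : Set G₁) * (H₁₄ : Set G₁)) Q →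
      fwd H₃₄ K₃₄ φ₃₄ (fwd H₁₃ K₁₃ φ₁₃ Q) = fwd H₁₄ K₁₄ φ₁₄ (C₁₃₄⁻¹ * Q * C₁₃₄))
    -- semi-frame conditions for the triple (2,3,4)
    (h234a : fwd H₂₃ K₂₃ φ₂₃ ((H₂₃ : Set G₂) * (H₂₄ : Set G₂)) = (K₂₃ : Set G₃) * (H₃₄ : Set G₃))
    (h234b : fwd H₃₄ K₃₄ φ₃₄ ((K₂₃ : Set G₃) * (H₃₄ : Set G₃)) = (K₂₄ : Set G₄) * (K₃₄ : Set G₄))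
    (h234c : fwd H₂₄ K₂₄ φ₂₄ ((H₂₃ : Set G₂) * (H₂₄ : Set G₂)) = (K₂₄ : Set G₄) * (K₃₄ : Set G₄))
    (h234d : ∀ Q : Set G₂, IsUnionOfCosets ((H₂₃ : Set G₂) * (H₂₄ : Set G₂)) Q →
      fwd H₃₄ K₃₄ φ₃₄ (fwd H₂₃ K₂₃ φ₂₃ Q) = fwd H₂₄ K₂₄ φ₂₄ (C₂₃₄⁻¹ * Q * C₂₃₄)) :
    List.TFAE
      [ (∃ (a : G₁ ⧸ H₁₂) (b : G₂ ⧸ H₂₃) (c : G₃ ⧸ H₃₄),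
          (⋃ γ ∈ {γ : G₁ ⧸ H₁₃ |
              cosetOf H₁₃ γ ⊆
                bwd H₁₂ K₁₂ φ₁₂ (cosetOf K₁₂ (φ₁₂ a) * cosetOf H₂₃ b) * C₁₂₃},
            unionAtoms H₁₄ K₁₄ φ₁₄
              (bwd H₁₃ K₁₃ φ₁₃ (cosetOf K₁₃ (φ₁₃ γ) * cosetOf H₃₄ c) * C₁₃₄)) =
          (⋃ e ∈ {e : G₂ ⧸ H₂₄ |
              cosetOf H₂₄ e ⊆
                bwd H₂₃ K₂₃ φ₂₃ (cosetOf K₂₃ (φ₂₃ b) * cosetOf H₃₄ c) * C₂₃₄},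
            unionAtoms H₁₄ K₁₄ φ₁₄
              (bwd H₁₂ K₁₂ φ₁₂ (cosetOf K₁₂ (φ₁₂ a) * cosetOf H₂₄ e) * C₁₂₄))),
        (∀ (a : G₁ ⧸ H₁₂) (b : G₂ ⧸ H₂₃) (c : G₃ ⧸ H₃₄),
          (⋃ γ ∈ {γ : G₁ ⧸ H₁₃ |
              cosetOf H₁₃ γ ⊆
                bwd H₁₂ K₁₂ φ₁₂ (cosetOf K₁₂ (φ₁₂ a) * cosetOf H₂₃ b) * C₁₂₃},
            unionAtoms H₁₄ K₁₄ φ₁₄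
              (bwd H₁₃ K₁₃ φ₁₃ (cosetOf K₁₃ (φ₁₃ γ) * cosetOf H₃₄ c) * C₁₃₄)) =
          (⋃ e ∈ {e : G₂ ⧸ H₂₄ |
              cosetOf H₂₄ e ⊆
                bwd H₂₃ K₂₃ φ₂₃ (cosetOf K₂₃ (φ₂₃ b) * cosetOf H₃₄ c) * C₂₃₄},
            unionAtoms H₁₄ K₁₄ φ₁₄
              (bwd H₁₂ K₁₂ φ₁₂ (cosetOf K₁₂ (φ₁₂ a) * cosetOf H₂₄ e) * C₁₂₄))),
        C₁₂₃ * C₁₃₄ = bwd H₁₂ K₁₂ φ₁₂ (C₂₃₄ * (K₁₂ : Set G₂)) * C₁₂₄ ] := by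
  classical
  -- shorthand for the two big expressions
  obtain ⟨p, hp⟩ := hC₁₂₃
  obtain ⟨q, hq⟩ := hC₁₃₄
  obtain ⟨r, hr⟩ := hC₂₃₄
  obtain ⟨s, hs⟩ := hC₁₂₄
  haveI : (H₁₂ ⊔ H₁₃).Normal := Subgroup.sup_normal _ _
  haveI : (H₁₃ ⊔ H₁₄).Normal := Subgroup.sup_normal _ _
  haveI : (H₁₂ ⊔ H₁₄).Normal := Subgroup.sup_normal _ _
  haveI : (H₂₃ ⊔ H₂₄).Normal := Subgroup.sup_normal _ _
  haveI : (K₁₂ ⊔ H₂₃).Normal := Subgroup.sup_normal _ _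
  haveI : (K₁₂ ⊔ H₂₄).Normal := Subgroup.sup_normal _ _
  haveI : (K₁₃ ⊔ H₃₄).Normal := Subgroup.sup_normal _ _
  haveI : (K₂₃ ⊔ H₃₄).Normal := Subgroup.sup_normal _ _
  haveI : (K₁₃ ⊔ K₂₃).Normal := Subgroup.sup_normal _ _
  haveI : (H₁₂ ⊔ H₁₃ ⊔ H₁₄).Normal := Subgroup.sup_normal _ _
  haveI : (K₁₂ ⊔ H₂₃ ⊔ H₂₄).Normal := Subgroup.sup_normal _ _
  rw [coe_mul_coe H₁₂ H₁₃] at h123a h123c h123d hp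
  rw [coe_mul_coe K₁₂ H₂₃] at h123a h123b
  rw [coe_mul_coe K₁₃ K₂₃] at h123b h123c
  rw [coe_mul_coe H₁₃ H₁₄] at h134a hq
  rw [coe_mul_coe K₁₃ H₃₄] at h134a
  rw [coe_mul_coe H₂₃ H₂₄] at h234a hr
  rw [coe_mul_coe K₂₃ H₃₄] at h234a
  rw [coe_mul_coe H₁₂ H₁₄] at h124a hs
  rw [coe_mul_coe K₁₂ H₂₄] at h124a
  -- fwd of the big join
  have hsupJ : (H₁₂ ⊔ H₁₃) ⊔ (H₁₂ ⊔ H₁₄) = H₁₂ ⊔ H₁₃ ⊔ H₁₄ := by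
    simp only [sup_assoc, sup_comm, sup_left_comm, sup_idem, sup_left_idem]
  have hsupL : (K₁₂ ⊔ H₂₃) ⊔ (K₁₂ ⊔ H₂₄) = K₁₂ ⊔ H₂₃ ⊔ H₂₄ := by
    simp only [sup_assoc, sup_comm, sup_left_comm, sup_idem, sup_left_idem]
  have hsupJ2 : (H₁₂ ⊔ H₁₃) ⊔ (H₁₃ ⊔ H₁₄) = H₁₂ ⊔ H₁₃ ⊔ H₁₄ := by
    simp only [sup_assoc, sup_comm, sup_left_comm, sup_idem, sup_left_idem]
  have hsupL2 : (H₂₃ ⊔ H₂₄) ⊔ (K₁₂ ⊔ H₂₄) = K₁₂ ⊔ H₂₃ ⊔ H₂₄ := by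
    simp only [sup_assoc, sup_comm, sup_left_comm, sup_idem, sup_left_idem]
  have hsupL3 : (H₂₃ ⊔ H₂₄) ⊔ K₁₂ = K₁₂ ⊔ H₂₃ ⊔ H₂₄ := by
    simp only [sup_assoc, sup_comm, sup_left_comm, sup_idem, sup_left_idem]
  have hJ124 : (H₁₂ ⊔ H₁₃ ⊔ H₁₄) ⊔ (H₁₂ ⊔ H₁₄) = H₁₂ ⊔ H₁₃ ⊔ H₁₄ :=
    sup_eq_left.2 (sup_le (le_sup_left.trans le_sup_left) le_sup_right)
  have hle12 : H₁₂ ≤ H₁₂ ⊔ H₁₃ ⊔ H₁₄ := le_sup_left.trans le_sup_left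
  have hle14 : H₁₄ ≤ H₁₂ ⊔ H₁₃ ⊔ H₁₄ := le_sup_right
  have hfJ : fwd H₁₂ K₁₂ φ₁₂ ((H₁₂ ⊔ H₁₃ ⊔ H₁₄ : Subgroup G₁) : Set G₁)
      = ((K₁₂ ⊔ H₂₃ ⊔ H₂₄ : Subgroup G₂) : Set G₂) := by
    have h1 : ((H₁₂ ⊔ H₁₃ ⊔ H₁₄ : Subgroup G₁) : Set G₁)
        = ((H₁₂ ⊔ H₁₃ : Subgroup G₁) : Set G₁) * ((H₁₂ ⊔ H₁₄ : Subgroup G₁) : Set G₁) := by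
      rw [coe_mul_coe, hsupJ]
    rw [h1, fwd_mul, h123a, h124a, coe_mul_coe, hsupL]
  obtain ⟨r₁, hr₁⟩ : ∃ g : G₁, φ₁₂ ((g : G₁) : G₁ ⧸ H₁₂) = ((r : G₂) : G₂ ⧸ K₁₂) :=
    ⟨(φ₁₂.symm ((r : G₂) : G₂ ⧸ K₁₂)).out, by
      rw [QuotientGroup.out_eq']; exact φ₁₂.apply_symm_apply _⟩
  -- the pivot condition
  have hmain : ∀ (a : G₁ ⧸ H₁₂) (b : G₂ ⧸ H₂₃) (c : G₃ ⧸ H₃₄),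
      ((⋃ γ ∈ {γ : G₁ ⧸ H₁₃ |
            cosetOf H₁₃ γ ⊆
              bwd H₁₂ K₁₂ φ₁₂ (cosetOf K₁₂ (φ₁₂ a) * cosetOf H₂₃ b) * C₁₂₃},
          unionAtoms H₁₄ K₁₄ φ₁₄
            (bwd H₁₃ K₁₃ φ₁₃ (cosetOf K₁₃ (φ₁₃ γ) * cosetOf H₃₄ c) * C₁₃₄)) =
        (⋃ e ∈ {e : G₂ ⧸ H₂₄ |
            cosetOf H₂₄ e ⊆
              bwd H₂₃ K₂₃ φ₂₃ (cosetOf K₂₃ (φ₂₃ b) * cosetOf H₃₄ c) * C₂₃₄},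
          unionAtoms H₁₄ K₁₄ φ₁₄
            (bwd H₁₂ K₁₂ φ₁₂ (cosetOf K₁₂ (φ₁₂ a) * cosetOf H₂₄ e) * C₁₂₄)))
      ↔ q⁻¹ * (p⁻¹ * (r₁ * s)) ∈ H₁₂ ⊔ H₁₃ ⊔ H₁₄ := by
    intro a b c
    obtain ⟨b₁, hb₁⟩ : ∃ g : G₁, φ₁₂ ((g : G₁) : G₁ ⧸ H₁₂) = ((b.out : G₂) : G₂ ⧸ K₁₂) :=
      ⟨(φ₁₂.symm _).out, by rw [QuotientGroup.out_eq']; exact φ₁₂.apply_symm_apply _⟩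
    obtain ⟨c₁, hc₁⟩ : ∃ g : G₁, φ₁₃ ((g : G₁) : G₁ ⧸ H₁₃) = ((c.out : G₃) : G₃ ⧸ K₁₃) :=
      ⟨(φ₁₃.symm _).out, by rw [QuotientGroup.out_eq']; exact φ₁₃.apply_symm_apply _⟩
    obtain ⟨c₂, hc₂⟩ : ∃ g : G₂, φ₂₃ ((g : G₂) : G₂ ⧸ H₂₃) = ((c.out : G₃) : G₃ ⧸ K₂₃) :=
      ⟨(φ₂₃.symm _).out, by rw [QuotientGroup.out_eq']; exact φ₂₃.apply_symm_apply _⟩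
    obtain ⟨c₁', hc₁'⟩ : ∃ g : G₁, φ₁₂ ((g : G₁) : G₁ ⧸ H₁₂) = ((c₂ : G₂) : G₂ ⧸ K₁₂) :=
      ⟨(φ₁₂.symm _).out, by rw [QuotientGroup.out_eq']; exact φ₁₂.apply_symm_apply _⟩
    -- Step 1 : the left-hand coset A
    have hgA : φ₁₂ ((a.out * b₁ : G₁) : G₁ ⧸ H₁₂) = φ₁₂ a * ((b.out : G₂) : G₂ ⧸ K₁₂) := by
      rw [QuotientGroup.mk_mul, map_mul, QuotientGroup.out_eq', hb₁]
    have hA : bwd H₁₂ K₁₂ φ₁₂ (cosetOf K₁₂ (φ₁₂ a) * cosetOf H₂₃ b) * C₁₂₃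
        = (a.out * b₁ * p) • ((H₁₂ ⊔ H₁₃ : Subgroup G₁) : Set G₁) := by
      rw [bwd_cosetOf_mul' φ₁₂ le_sup_left h123a a b hgA, hp, smul_coe_mul_smul_coe]
    -- Step 2 : the inner cosets T(w) and the LHS as relOf
    have hL : (⋃ γ ∈ {γ : G₁ ⧸ H₁₃ |
            cosetOf H₁₃ γ ⊆
              bwd H₁₂ K₁₂ φ₁₂ (cosetOf K₁₂ (φ₁₂ a) * cosetOf H₂₃ b) * C₁₂₃},
          unionAtoms H₁₄ K₁₄ φ₁₄
            (bwd H₁₃ K₁₃ φ₁₃ (cosetOf K₁₃ (φ₁₃ γ) * cosetOf H₃₄ c) * C₁₃₄))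
        = relOf φ₁₄ ((a.out * b₁ * p * (c₁ * q)) •
            ((H₁₂ ⊔ H₁₃ ⊔ H₁₄ : Subgroup G₁) : Set G₁)) := by
      rw [hA, biUnion_quot (smul_coe_saturated le_sup_right _)
        (fun γ => unionAtoms H₁₄ K₁₄ φ₁₄
          (bwd H₁₃ K₁₃ φ₁₃ (cosetOf K₁₃ (φ₁₃ γ) * cosetOf H₃₄ c) * C₁₃₄))]
      have hstep : ∀ w : G₁,
          unionAtoms H₁₄ K₁₄ φ₁₄
            (bwd H₁₃ K₁₃ φ₁₃ (cosetOf K₁₃ (φ₁₃ ((w : G₁) : G₁ ⧸ H₁₃)) * cosetOf H₃₄ c) * C₁₃₄)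
          = relOf φ₁₄ (w • ((c₁ * q) • ((H₁₃ ⊔ H₁₄ : Subgroup G₁) : Set G₁))) := by
        intro w
        have hgw : φ₁₃ ((w * c₁ : G₁) : G₁ ⧸ H₁₃)
            = φ₁₃ ((w : G₁) : G₁ ⧸ H₁₃) * ((c.out : G₃) : G₃ ⧸ K₁₃) := by
          rw [QuotientGroup.mk_mul, map_mul, hc₁]
        have hT : bwd H₁₃ K₁₃ φ₁₃
              (cosetOf K₁₃ (φ₁₃ ((w : G₁) : G₁ ⧸ H₁₃)) * cosetOf H₃₄ c) * C₁₃₄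
            = (w * c₁ * q) • ((H₁₃ ⊔ H₁₄ : Subgroup G₁) : Set G₁) := by
          rw [bwd_cosetOf_mul' φ₁₃ le_sup_left h134a ((w : G₁) : G₁ ⧸ H₁₃) c hgw, hq,
            smul_coe_mul_smul_coe]
        rw [hT, unionAtoms_eq_relOf φ₁₄ (smul_coe_saturated le_sup_right _),
          mul_assoc, ← smul_smul]
      rw [Set.iUnion₂_congr (fun w _ => hstep w), relOf_biUnion, biUnion_smul, smul_mul,
        coe_mul_smul, coe_mul_coe, hsupJ2, smul_smul]
    -- Step 3 : the coset D and the RHS as relOf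
    have hgD : φ₂₃ ((b.out * c₂ : G₂) : G₂ ⧸ H₂₃) = φ₂₃ b * ((c.out : G₃) : G₃ ⧸ K₂₃) := by
      rw [QuotientGroup.mk_mul, map_mul, QuotientGroup.out_eq', hc₂]
    have hD : bwd H₂₃ K₂₃ φ₂₃ (cosetOf K₂₃ (φ₂₃ b) * cosetOf H₃₄ c) * C₂₃₄
        = (b.out * c₂ * r) • ((H₂₃ ⊔ H₂₄ : Subgroup G₂) : Set G₂) := by
      rw [bwd_cosetOf_mul' φ₂₃ le_sup_left h234a b c hgD, hr, smul_coe_mul_smul_coe]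
    have hR : (⋃ e ∈ {e : G₂ ⧸ H₂₄ |
            cosetOf H₂₄ e ⊆
              bwd H₂₃ K₂₃ φ₂₃ (cosetOf K₂₃ (φ₂₃ b) * cosetOf H₃₄ c) * C₂₃₄},
          unionAtoms H₁₄ K₁₄ φ₁₄
            (bwd H₁₂ K₁₂ φ₁₂ (cosetOf K₁₂ (φ₁₂ a) * cosetOf H₂₄ e) * C₁₂₄))
        = relOf φ₁₄ ((a.out * (b₁ * (c₁' * r₁)) * s) •
            ((H₁₂ ⊔ H₁₃ ⊔ H₁₄ : Subgroup G₁) : Set G₁)) := by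
      rw [hD, biUnion_quot (smul_coe_saturated le_sup_right _)
        (fun e => unionAtoms H₁₄ K₁₄ φ₁₄
          (bwd H₁₂ K₁₂ φ₁₂ (cosetOf K₁₂ (φ₁₂ a) * cosetOf H₂₄ e) * C₁₂₄))]
      -- turn each unionAtoms into relOf
      have hstep : ∀ u : G₂,
          unionAtoms H₁₄ K₁₄ φ₁₄
            (bwd H₁₂ K₁₂ φ₁₂ (cosetOf K₁₂ (φ₁₂ a) * cosetOf H₂₄ ((u : G₂) : G₂ ⧸ H₂₄)) * C₁₂₄)
          = relOf φ₁₄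
            (bwd H₁₂ K₁₂ φ₁₂ (cosetOf K₁₂ (φ₁₂ a) * cosetOf H₂₄ ((u : G₂) : G₂ ⧸ H₂₄)) * C₁₂₄) := by
        intro u
        have hform : ∃ g : G₁, bwd H₁₂ K₁₂ φ₁₂
              (cosetOf K₁₂ (φ₁₂ a) * cosetOf H₂₄ ((u : G₂) : G₂ ⧸ H₂₄)) * C₁₂₄
            = g • ((H₁₂ ⊔ H₁₄ : Subgroup G₁) : Set G₁) :=
          ⟨_, by rw [bwd_cosetOf_mul φ₁₂ le_sup_left h124a a ((u : G₂) : G₂ ⧸ H₂₄), hs,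
            smul_coe_mul_smul_coe]⟩
        obtain ⟨g, hg⟩ := hform
        rw [unionAtoms_eq_relOf φ₁₄ (by rw [hg]; exact smul_coe_saturated le_sup_right _)]
      rw [Set.iUnion₂_congr (fun u _ => hstep u), relOf_biUnion]
      congr 1
      -- compute the union of the sets
      have h1 : (⋃ u ∈ (b.out * c₂ * r) • ((H₂₃ ⊔ H₂₄ : Subgroup G₂) : Set G₂),
            bwd H₁₂ K₁₂ φ₁₂ (cosetOf K₁₂ (φ₁₂ a) * cosetOf H₂₄ ((u : G₂) : G₂ ⧸ H₂₄)) * C₁₂₄)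
          = bwd H₁₂ K₁₂ φ₁₂
              (⋃ u ∈ (b.out * c₂ * r) • ((H₂₃ ⊔ H₂₄ : Subgroup G₂) : Set G₂),
                cosetOf K₁₂ (φ₁₂ a) * cosetOf H₂₄ ((u : G₂) : G₂ ⧸ H₂₄)) * C₁₂₄ := by
        rw [bwd_biUnion, biUnion_mul]
      rw [h1]
      have h2 : (⋃ u ∈ (b.out * c₂ * r) • ((H₂₃ ⊔ H₂₄ : Subgroup G₂) : Set G₂),
            cosetOf K₁₂ (φ₁₂ a) * cosetOf H₂₄ ((u : G₂) : G₂ ⧸ H₂₄))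
          = (φ₁₂ a).out • ((b.out * c₂ * r) • ((H₂₃ ⊔ H₂₄ : Subgroup G₂) : Set G₂) *
              ((K₁₂ ⊔ H₂₄ : Subgroup G₂) : Set G₂)) := by
        rw [← biUnion_mul_smul]
        refine Set.iUnion₂_congr (fun u _ => ?_)
        rw [cosetOf_mul_cosetOf]
        exact rep_change _ _ _ (Subgroup.mem_sup_right (QuotientGroup.eq.1
          (QuotientGroup.out_eq' ((u : G₂) : G₂ ⧸ H₂₄))))
      rw [h2, smul_mul, coe_mul_coe, hsupL2, smul_smul]
      have hg3 : φ₁₂ ((a.out * (b₁ * (c₁' * r₁)) : G₁) : G₁ ⧸ H₁₂)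
          = (((φ₁₂ a).out * (b.out * c₂ * r) : G₂) : G₂ ⧸ K₁₂) := by
        simp only [QuotientGroup.mk_mul, map_mul, QuotientGroup.out_eq', hb₁, hc₁', hr₁,
          mul_assoc]
      rw [bwd_smul_of_fwd φ₁₂ hle12 hfJ hg3, hs, smul_coe_mul_smul, coe_mul_coe, hJ124]
    -- Step 4 : the relation between c₁ and c₁' coming from the frame condition (1,2,3)
    have hX : c₁⁻¹ * (p⁻¹ * c₁' * p) ∈ H₁₂ ⊔ H₁₃ := by
      have hQ : IsUnionOfCosets ((H₁₂ ⊔ H₁₃ : Subgroup G₁) : Set G₁)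
          (c₁' • ((H₁₂ ⊔ H₁₃ : Subgroup G₁) : Set G₁)) :=
        smul_coe_saturated le_rfl _
      have hd := h123d (c₁' • ((H₁₂ ⊔ H₁₃ : Subgroup G₁) : Set G₁)) hQ
      rw [fwd_smul φ₁₂ hc₁', h123a, fwd_smul φ₂₃ hc₂, h123b, hp, inv_smul_coe] at hd
      have hprod : p⁻¹ • ((H₁₂ ⊔ H₁₃ : Subgroup G₁) : Set G₁) *
            (c₁' • ((H₁₂ ⊔ H₁₃ : Subgroup G₁) : Set G₁)) *
            (p • ((H₁₂ ⊔ H₁₃ : Subgroup G₁) : Set G₁))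
          = (p⁻¹ * c₁' * p) • ((H₁₂ ⊔ H₁₃ : Subgroup G₁) : Set G₁) := by
        rw [smul_coe_mul_smul_coe, smul_coe_mul_smul_coe]
      rw [hprod] at hd
      have hz : φ₁₃ (((p⁻¹ * c₁' * p : G₁)) : G₁ ⧸ H₁₃)
          = (((φ₁₃ (((p⁻¹ * c₁' * p : G₁)) : G₁ ⧸ H₁₃)).out : G₃) : G₃ ⧸ K₁₃) := by
        rw [QuotientGroup.out_eq']
      rw [fwd_smul φ₁₃ hz, h123c] at hd
      have hm := smul_coe_eq_iff.1 hd
      have hmem : c₁⁻¹ * (p⁻¹ * c₁' * p) ∈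
          bwd H₁₃ K₁₃ φ₁₃ ((K₁₃ ⊔ K₂₃ : Subgroup G₃) : Set G₃) := by
        refine ⟨c.out⁻¹ * (φ₁₃ (((p⁻¹ * c₁' * p : G₁)) : G₁ ⧸ H₁₃)).out, hm, ?_⟩
        simp only [QuotientGroup.mk_mul, QuotientGroup.mk_inv, map_mul, map_inv, hc₁,
          QuotientGroup.out_eq']
      rw [← h123c, bwd_fwd, coe_mul_coe_of_le le_sup_right] at hmem
      exact hmem
    -- Step 5 : put everything together
    rw [hL, hR, relOf_eq_iff φ₁₄ (smul_coe_saturated hle14 _) (smul_coe_saturated hle14 _),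
      smul_coe_eq_iff]
    have hjJ : c₁⁻¹ * (p⁻¹ * c₁' * p) ∈ H₁₂ ⊔ H₁₃ ⊔ H₁₄ := Subgroup.mem_sup_left hX
    have hconj : q⁻¹ * (c₁⁻¹ * (p⁻¹ * c₁' * p)) * q⁻¹⁻¹ ∈ H₁₂ ⊔ H₁₃ ⊔ H₁₄ :=
      Subgroup.Normal.conj_mem ‹(H₁₂ ⊔ H₁₃ ⊔ H₁₄).Normal› _ hjJ q⁻¹
    have key : (a.out * b₁ * p * (c₁ * q))⁻¹ * (a.out * (b₁ * (c₁' * r₁)) * s)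
        = (q⁻¹ * (c₁⁻¹ * (p⁻¹ * c₁' * p)) * q⁻¹⁻¹) * (q⁻¹ * (p⁻¹ * (r₁ * s))) := by
      group
    rw [key]
    exact (H₁₂ ⊔ H₁₃ ⊔ H₁₄).mul_mem_cancel_left hconj
  -- the third condition is also equivalent to the pivot
  have hiii : (C₁₂₃ * C₁₃₄ = bwd H₁₂ K₁₂ φ₁₂ (C₂₃₄ * (K₁₂ : Set G₂)) * C₁₂₄)
      ↔ q⁻¹ * (p⁻¹ * (r₁ * s)) ∈ H₁₂ ⊔ H₁₃ ⊔ H₁₄ := by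
    rw [hp, hq, hr, hs]
    have hL3 : p • ((H₁₂ ⊔ H₁₃ : Subgroup G₁) : Set G₁) *
          (q • ((H₁₃ ⊔ H₁₄ : Subgroup G₁) : Set G₁))
        = (p * q) • ((H₁₂ ⊔ H₁₃ ⊔ H₁₄ : Subgroup G₁) : Set G₁) := by
      rw [smul_coe_mul_smul, coe_mul_coe, hsupJ2]
    have hR3 : bwd H₁₂ K₁₂ φ₁₂
          (r • ((H₂₃ ⊔ H₂₄ : Subgroup G₂) : Set G₂) * (K₁₂ : Set G₂)) *
          (s • ((H₁₂ ⊔ H₁₄ : Subgroup G₁) : Set G₁))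
        = (r₁ * s) • ((H₁₂ ⊔ H₁₃ ⊔ H₁₄ : Subgroup G₁) : Set G₁) := by
      have h4 : r • ((H₂₃ ⊔ H₂₄ : Subgroup G₂) : Set G₂) * (K₁₂ : Set G₂)
          = r • ((K₁₂ ⊔ H₂₃ ⊔ H₂₄ : Subgroup G₂) : Set G₂) := by
        rw [smul_mul, coe_mul_coe, hsupL3]
      rw [h4, bwd_smul_of_fwd φ₁₂ hle12 hfJ hr₁, smul_coe_mul_smul, coe_mul_coe, hJ124]
    rw [hL3, hR3, smul_coe_eq_iff,
      show (p * q)⁻¹ * (r₁ * s) = q⁻¹ * (p⁻¹ * (r₁ * s)) by group]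
  tfae_have 1 → 2 := by
    rintro ⟨a, b, c, h⟩ a' b' c'
    exact (hmain a' b' c').2 ((hmain a b c).1 h)
  tfae_have 2 → 3 := fun h => hiii.2 ((hmain 1 1 1).1 (h 1 1 1))
  tfae_have 3 → 1 := fun h => ⟨1, 1, 1, (hmain 1 1 1).2 (hiii.1 h)⟩
  tfae_finish

end CosetRA
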